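/- Let μ and ν be Borel probability measures on ℝ and let z ∈ ℂ∖ℝ. Then 1 − x·G_ν(z) ≠ 0 for every x ∈ ℝ, and for every ψ ∈ L²(ℝ×ℝ, μ⊗ν) the function φ(x,y) = ψ(x,y)/(z−y) + x·(∫_ℝ ψ(x,y′)/(z−y′) dν(y′)) / ((z−y)(1−x·G_ν(z))) belongs to L²(ℝ×ℝ, μ⊗ν); the assignment ψ ↦ φ is a bounded linear operator on L²(μ⊗ν); the functions (x,y) ↦ x·∫_ℝ φ(x,y′) dν(y′) and (x,y) ↦ y·φ(x,y) belong to L²(μ⊗ν); and z·φ(x,y) − x·∫_ℝ φ(x,y′) dν(y′) − y·φ(x,y) = ψ(x,y) for μ⊗ν-almost every (x,y). (That is, the displayed formula defines a bounded right inverse of the operator z − M_x P₂ − M_y of the monotone model.) -/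

import Mathlib

open MeasureTheory
open scoped ENNReal NNReal

/-- The Cauchy transform `G_ρ(z) = ∫ 1/(z−t) dρ(t)` of a measure on `ℝ`. -/
noncomputable def cauchyTransform (ρ : Measure ℝ) (z : ℂ) : ℂ := ∫ t, (z - (t : ℂ))⁻¹ ∂ρ

/-- The candidate resolvent `φ(x,y) = ψ(x,y)/(z−y)
+ x·(∫ ψ(x,y′)/(z−y′) dν(y′)) / ((z−y)(1−x·G_ν(z)))` of the monotone model. -/
noncomputable def monResolvent (ν : Measure ℝ) (z : ℂ) (ψ : ℝ × ℝ → ℂ) : ℝ × ℝ → ℂ :=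
  fun p =>
    ψ p / (z - (p.2 : ℂ)) +
      ((p.1 : ℂ) * ∫ y, ψ (p.1, y) / (z - (y : ℂ)) ∂ν) /
        ((z - (p.2 : ℂ)) * (1 - (p.1 : ℂ) * cauchyTransform ν z))

namespace MonRes

set_option linter.unusedSectionVars false
set_option linter.unusedVariables false


variable {ν : Measure ℝ} [IsProbabilityMeasure ν] {z : ℂ}

lemma sub_ofReal_ne (hz : z.im ≠ 0) (y : ℝ) : z - (y : ℂ) ≠ 0 := by
  intro h
  apply hz
  have := congrArg Complex.im h
  simpa using this

lemma norm_sub_ofReal (y : ℝ) : |z.im| ≤ ‖z - (y : ℂ)‖ := by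
  have h : (z - (y : ℂ)).im = z.im := by simp
  calc |z.im| = |(z - (y : ℂ)).im| := by rw [h]
  _ ≤ ‖z - (y : ℂ)‖ := Complex.abs_im_le_norm _

lemma norm_inv_sub_le (hz : z.im ≠ 0) (y : ℝ) : ‖(z - (y : ℂ))⁻¹‖ ≤ |z.im|⁻¹ := by
  rw [norm_inv]
  exact inv_anti₀ (abs_pos.2 hz) (norm_sub_ofReal y)

lemma continuous_inv_sub (hz : z.im ≠ 0) : Continuous (fun t : ℝ => (z - (t : ℂ))⁻¹) :=
  (continuous_const.sub Complex.continuous_ofReal).inv₀ (fun t => sub_ofReal_ne hz t)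

lemma integrable_inv_sub (hz : z.im ≠ 0) : Integrable (fun t : ℝ => (z - (t : ℂ))⁻¹) ν :=
  Integrable.mono' (integrable_const (|z.im|⁻¹)) (continuous_inv_sub hz).aestronglyMeasurable
    (Filter.Eventually.of_forall fun t => norm_inv_sub_le hz t)

lemma normSq_pos (hz : z.im ≠ 0) (t : ℝ) : 0 < Complex.normSq (z - (t : ℂ)) :=
  Complex.normSq_pos.2 (sub_ofReal_ne hz t)

lemma integral_normSq_pos (hz : z.im ≠ 0) :
    0 < ∫ t, (Complex.normSq (z - (t : ℂ)))⁻¹ ∂ν := by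
  have hcont : Continuous (fun t : ℝ => (Complex.normSq (z - (t : ℂ)))⁻¹ : ℝ → ℝ) :=
    (Complex.continuous_normSq.comp (continuous_const.sub Complex.continuous_ofReal)).inv₀
      (fun t => (normSq_pos hz t).ne')
  have hint : Integrable (fun t : ℝ => (Complex.normSq (z - (t : ℂ)))⁻¹) ν := by
    refine Integrable.mono' (integrable_const ((z.im ^ 2)⁻¹)) hcont.aestronglyMeasurable
      (Filter.Eventually.of_forall fun t => ?_)
    rw [Real.norm_eq_abs, abs_of_pos (inv_pos.2 (normSq_pos hz t))]
    refine inv_anti₀ (by positivity) ?_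
    calc z.im ^ 2 = (z - (t : ℂ)).im ^ 2 := by simp
    _ ≤ (z - (t : ℂ)).re ^ 2 + (z - (t : ℂ)).im ^ 2 := le_add_of_nonneg_left (sq_nonneg _)
    _ = Complex.normSq (z - (t : ℂ)) := by rw [Complex.normSq_apply]; ring
  rw [integral_pos_iff_support_of_nonneg (fun t => inv_nonneg.2 (Complex.normSq_nonneg _)) hint]
  have : Function.support (fun t : ℝ => (Complex.normSq (z - (t : ℂ)))⁻¹) = Set.univ := by
    ext t; simpa [Function.mem_support] using (inv_pos.2 (normSq_pos hz t)).ne'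
  rw [this]
  simp

lemma im_cauchyTransform (hz : z.im ≠ 0) :
    (cauchyTransform ν z).im = -z.im * ∫ t, (Complex.normSq (z - (t : ℂ)))⁻¹ ∂ν := by
  have h := integral_im (μ := ν) (f := fun t : ℝ => (z - (t : ℂ))⁻¹) (integrable_inv_sub hz)
  simp only [RCLike.im_to_complex] at h
  rw [cauchyTransform, ← h]
  rw [← integral_const_mul]
  refine integral_congr_ae (Filter.Eventually.of_forall fun t => ?_)
  simp only [RCLike.im_to_complex, Complex.inv_im]
  have : (z - (t : ℂ)).im = z.im := by simp
  rw [this]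
  field_simp

lemma im_cauchyTransform_ne (hz : z.im ≠ 0) : (cauchyTransform ν z).im ≠ 0 := by
  rw [im_cauchyTransform hz]
  exact mul_ne_zero (neg_ne_zero.2 hz) (integral_normSq_pos hz).ne'

lemma one_sub_mul_ne (hz : z.im ≠ 0) (x : ℝ) :
    1 - (x : ℂ) * cauchyTransform ν z ≠ 0 := by
  rcases eq_or_ne x 0 with h | h
  · simp [h]
  · intro hc
    have h1 : ((1 : ℂ) - (x : ℂ) * cauchyTransform ν z).im = 0 := by rw [hc]; simp
    have h2 : ((1 : ℂ) - (x : ℂ) * cauchyTransform ν z).im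
        = -(x * (cauchyTransform ν z).im) := by
      simp [Complex.sub_im, Complex.mul_im]
    rw [h2, neg_eq_zero] at h1
    exact (mul_ne_zero h (im_cauchyTransform_ne hz)) h1

lemma abs_le_norm_one_sub_mul (hz : z.im ≠ 0) (x : ℝ) :
    |x| ≤ |(cauchyTransform ν z).im|⁻¹ * ‖1 - (x : ℂ) * cauchyTransform ν z‖ := by
  set G := cauchyTransform ν z with hG
  have h2 : ((1 : ℂ) - (x : ℂ) * G).im = -(x * G.im) := by
    simp [Complex.sub_im, Complex.mul_im]
  have h1 : |x| * |G.im| ≤ ‖1 - (x : ℂ) * G‖ := by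
    calc |x| * |G.im| = |((1 : ℂ) - (x : ℂ) * G).im| := by rw [h2, abs_neg, abs_mul]
    _ ≤ ‖1 - (x : ℂ) * G‖ := Complex.abs_im_le_norm _
  have hg : 0 < |G.im| := abs_pos.2 (im_cauchyTransform_ne hz)
  rw [inv_mul_eq_div, le_div_iff₀ hg]
  linarith [h1]



lemma eLpNorm_two_eq {α : Type*} [MeasurableSpace α] {μ : Measure α} (f : α → ℂ) :
    eLpNorm f 2 μ = (∫⁻ a, (‖f a‖₊ : ℝ≥0∞) ^ 2 ∂μ) ^ (1 / 2 : ℝ) := by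
  rw [eLpNorm_eq_lintegral_rpow_enorm_toReal two_ne_zero ENNReal.ofNat_ne_top]
  have h2 : (2 : ℝ≥0∞).toReal = ((2 : ℕ) : ℝ) := by norm_num
  simp_rw [h2, ENNReal.rpow_natCast]
  norm_num
  rfl

lemma eLpNorm_le_of_le_mul {α : Type*} [MeasurableSpace α] {μ : Measure α} {p : ℝ≥0∞}
    {f h : α → ℂ} {c : ℝ} (hc : 0 ≤ c) (hfh : ∀ a, ‖f a‖ ≤ c * ‖h a‖) :
    eLpNorm f p μ ≤ ENNReal.ofReal c * eLpNorm h p μ := by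
  calc eLpNorm f p μ ≤ eLpNorm (c • h) p μ := by
        refine eLpNorm_mono_ae (Filter.Eventually.of_forall fun a => ?_)
        simpa [norm_smul, abs_of_nonneg hc] using hfh a
  _ = (‖c‖₊ : ℝ≥0∞) * eLpNorm h p μ := eLpNorm_const_smul c h p μ
  _ = ENNReal.ofReal c * eLpNorm h p μ := by rw [← Real.enorm_eq_ofReal hc]; rfl

variable {α β : Type*} [MeasurableSpace α] [MeasurableSpace β]
  {μ : Measure α} {ν : Measure β} [SFinite μ] [IsProbabilityMeasure ν]

lemma measurePreserving_fst' : MeasurePreserving (Prod.fst : α × β → α) (μ.prod ν) μ :=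
  ⟨measurable_fst, by rw [Measure.map_fst_prod, measure_univ, one_smul]⟩

lemma memLp_integral_right {χ : α × β → ℂ} (hχ : MemLp χ 2 (μ.prod ν)) :
    MemLp (fun x => ∫ y, χ (x, y) ∂ν) 2 μ ∧
    eLpNorm (fun x => ∫ y, χ (x, y) ∂ν) 2 μ ≤ eLpNorm χ 2 (μ.prod ν) := by
  have hm : AEStronglyMeasurable (fun x => ∫ y, χ (x, y) ∂ν) μ := hχ.1.integral_prod_right'
  have key : ∫⁻ x, (‖∫ y, χ (x, y) ∂ν‖₊ : ℝ≥0∞) ^ 2 ∂μ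
      ≤ ∫⁻ p, (‖χ p‖₊ : ℝ≥0∞) ^ 2 ∂(μ.prod ν) := by
    have hsec : ∀ᵐ x ∂μ, AEStronglyMeasurable (fun y => χ (x, y)) ν := hχ.1.prodMk_left
    have step : ∀ᵐ x ∂μ, (‖∫ y, χ (x, y) ∂ν‖₊ : ℝ≥0∞) ^ 2
        ≤ ∫⁻ y, (‖χ (x, y)‖₊ : ℝ≥0∞) ^ 2 ∂ν := by
      filter_upwards [hsec] with x hx
      have h1 : (‖∫ y, χ (x, y) ∂ν‖₊ : ℝ≥0∞) ≤ eLpNorm (fun y => χ (x, y)) 2 ν := by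
        calc (‖∫ y, χ (x, y) ∂ν‖₊ : ℝ≥0∞) ≤ ∫⁻ y, ‖χ (x, y)‖₊ ∂ν :=
              enorm_integral_le_lintegral_enorm _
        _ = eLpNorm (fun y => χ (x, y)) 1 ν := by rw [eLpNorm_one_eq_lintegral_enorm]; rfl
        _ ≤ eLpNorm (fun y => χ (x, y)) 2 ν :=
              eLpNorm_le_eLpNorm_of_exponent_le (by norm_num) hx
      calc (‖∫ y, χ (x, y) ∂ν‖₊ : ℝ≥0∞) ^ 2 ≤ (eLpNorm (fun y => χ (x, y)) 2 ν) ^ 2 :=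
            pow_le_pow_left' h1 2
      _ = ∫⁻ y, (‖χ (x, y)‖₊ : ℝ≥0∞) ^ 2 ∂ν := by
            rw [eLpNorm_two_eq, ← ENNReal.rpow_natCast _ 2, ← ENNReal.rpow_mul]
            norm_num
    calc ∫⁻ x, (‖∫ y, χ (x, y) ∂ν‖₊ : ℝ≥0∞) ^ 2 ∂μ
        ≤ ∫⁻ x, ∫⁻ y, (‖χ (x, y)‖₊ : ℝ≥0∞) ^ 2 ∂ν ∂μ := lintegral_mono_ae step
    _ = ∫⁻ p, (‖χ p‖₊ : ℝ≥0∞) ^ 2 ∂(μ.prod ν) :=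
          (lintegral_prod _ (hχ.1.enorm.pow_const 2)).symm
  have hle : eLpNorm (fun x => ∫ y, χ (x, y) ∂ν) 2 μ ≤ eLpNorm χ 2 (μ.prod ν) := by
    rw [eLpNorm_two_eq, eLpNorm_two_eq]
    exact ENNReal.rpow_le_rpow key (by norm_num)
  exact ⟨⟨hm, hle.trans_lt hχ.2⟩, hle⟩



lemma good_sections {μ ν : Measure ℝ} [IsProbabilityMeasure μ] [IsProbabilityMeasure ν]
    {z : ℂ} (hz : z.im ≠ 0) {ψ : ℝ × ℝ → ℂ} (hψ : MemLp ψ 2 (μ.prod ν)) :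
    ∀ᵐ x ∂μ, Integrable (fun y => ψ (x, y) / (z - (y : ℂ))) ν := by
  have hcont2 : Continuous (fun p : ℝ × ℝ => z - (p.2 : ℂ)) :=
    continuous_const.sub (Complex.continuous_ofReal.comp continuous_snd)
  have hcont2i : Continuous (fun p : ℝ × ℝ => (z - (p.2 : ℂ))⁻¹) :=
    hcont2.inv₀ (fun p => sub_ofReal_ne hz p.2)
  have hχm : AEStronglyMeasurable (fun p : ℝ × ℝ => ψ p / (z - (p.2 : ℂ))) (μ.prod ν) := by
    have h := hψ.1.mul hcont2i.aestronglyMeasurable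
    refine h.congr (Filter.Eventually.of_forall fun p => ?_)
    simp only [Pi.mul_apply, div_eq_mul_inv]
  have hχ : MemLp (fun p : ℝ × ℝ => ψ p / (z - (p.2 : ℂ))) 2 (μ.prod ν) := by
    refine hψ.of_le_mul (c := |z.im|⁻¹) hχm (Filter.Eventually.of_forall fun p => ?_)
    simp only [div_eq_mul_inv, norm_mul]
    rw [mul_comm (|z.im|⁻¹)]
    exact mul_le_mul_of_nonneg_left (norm_inv_sub_le hz p.2) (norm_nonneg _)
  exact (memLp_one_iff_integrable.mp (hχ.mono_exponent one_le_two)).prod_right_ae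

lemma alg2 {x f G : ℂ} (hu : 1 - x * G ≠ 0) :
    f + x * f / (1 - x * G) * G = f / (1 - x * G) := by
  have h1 : (1 - x * G) * (1 - x * G)⁻¹ = 1 := mul_inv_cancel₀ hu
  simp only [div_eq_mul_inv]
  linear_combination (-f) * h1

lemma alg_main {z : ℂ} (y x a f G : ℂ) (hw : z - y ≠ 0) (hu : 1 - x * G ≠ 0) :
    z * (a / (z - y) + x * f / ((z - y) * (1 - x * G))) - x * (f / (1 - x * G))
      - y * (a / (z - y) + x * f / ((z - y) * (1 - x * G))) = a := by
  have h1 : (z - y) * (z - y)⁻¹ = 1 := mul_inv_cancel₀ hw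
  simp only [div_eq_mul_inv, mul_inv]
  linear_combination (a + x * f * (1 - x * G)⁻¹) * h1

lemma alg4 {z : ℂ} (y x a f G : ℂ) (hw : z - y ≠ 0) (hu : 1 - x * G ≠ 0) :
    y * (a / (z - y) + x * f / ((z - y) * (1 - x * G)))
      = z * (a / (z - y) + x * f / ((z - y) * (1 - x * G))) - a - x * f / (1 - x * G) := by
  have h := alg_main (z := z) y x a f G hw hu
  linear_combination -h

theorem main_aux {μ ν : Measure ℝ} [IsProbabilityMeasure μ] [IsProbabilityMeasure ν]
    {z : ℂ} (hz : z.im ≠ 0) {ψ : ℝ × ℝ → ℂ} (hψ : MemLp ψ 2 (μ.prod ν)) :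
    MemLp (monResolvent ν z ψ) 2 (μ.prod ν) ∧
    eLpNorm (monResolvent ν z ψ) 2 (μ.prod ν)
      ≤ (ENNReal.ofReal (|z.im|⁻¹)
          + ENNReal.ofReal (|z.im|⁻¹ * |(cauchyTransform ν z).im|⁻¹ * |z.im|⁻¹))
        * eLpNorm ψ 2 (μ.prod ν) ∧
    MemLp (fun p : ℝ × ℝ => (p.1 : ℂ) * ∫ y, monResolvent ν z ψ (p.1, y) ∂ν) 2 (μ.prod ν) ∧
    MemLp (fun p : ℝ × ℝ => (p.2 : ℂ) * monResolvent ν z ψ p) 2 (μ.prod ν) ∧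
    (∀ᵐ p ∂(μ.prod ν),
      z * monResolvent ν z ψ p
        - (p.1 : ℂ) * (∫ y, monResolvent ν z ψ (p.1, y) ∂ν)
        - (p.2 : ℂ) * monResolvent ν z ψ p = ψ p) := by
  set G := cauchyTransform ν z with hGdef
  have hG : ∀ x : ℝ, 1 - (x : ℂ) * G ≠ 0 := one_sub_mul_ne hz
  set d : ℝ := |z.im|⁻¹ with hd
  have hd0 : (0:ℝ) ≤ d := inv_nonneg.2 (abs_nonneg _)
  set gi : ℝ := |G.im|⁻¹ with hgi
  have hgi0 : (0:ℝ) ≤ gi := inv_nonneg.2 (abs_nonneg _)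
  set F : ℝ → ℂ := fun x => ∫ y, ψ (x, y) / (z - (y : ℂ)) ∂ν with hF
  set χ : ℝ × ℝ → ℂ := fun p => ψ p / (z - (p.2 : ℂ)) with hχdef
  set N : ℝ × ℝ → ℂ := fun p => ((p.1 : ℂ) * F p.1) / (1 - (p.1 : ℂ) * G) with hNdef
  set B : ℝ × ℝ → ℂ :=
    fun p => ((p.1 : ℂ) * F p.1) / ((z - (p.2 : ℂ)) * (1 - (p.1 : ℂ) * G)) with hBdef
  have hmR : monResolvent ν z ψ = fun p => χ p + B p := rfl
  -- measurability of χ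
  have hcont2 : Continuous (fun p : ℝ × ℝ => z - (p.2 : ℂ)) :=
    continuous_const.sub (Complex.continuous_ofReal.comp continuous_snd)
  have hcont2i : Continuous (fun p : ℝ × ℝ => (z - (p.2 : ℂ))⁻¹) :=
    hcont2.inv₀ (fun p => sub_ofReal_ne hz p.2)
  have hχm : AEStronglyMeasurable χ (μ.prod ν) := by
    have h := hψ.1.mul hcont2i.aestronglyMeasurable
    refine h.congr (Filter.Eventually.of_forall fun p => ?_)
    simp only [Pi.mul_apply, hχdef, div_eq_mul_inv]
  have hχbound : ∀ p : ℝ × ℝ, ‖χ p‖ ≤ d * ‖ψ p‖ := by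
    intro p
    rw [hχdef]
    simp only [div_eq_mul_inv, norm_mul]
    rw [mul_comm d]
    exact mul_le_mul_of_nonneg_left (norm_inv_sub_le hz p.2) (norm_nonneg _)
  have hχ : MemLp χ 2 (μ.prod ν) :=
    hψ.of_le_mul hχm (Filter.Eventually.of_forall fun p => (hχbound p).trans (le_of_eq rfl))
  have heχ : eLpNorm χ 2 (μ.prod ν) ≤ ENNReal.ofReal d * eLpNorm ψ 2 (μ.prod ν) :=
    eLpNorm_le_of_le_mul hd0 hχbound
  -- F
  have hFmem : MemLp F 2 μ ∧ eLpNorm F 2 μ ≤ eLpNorm χ 2 (μ.prod ν) := memLp_integral_right hχ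
  have hmp : MeasurePreserving (Prod.fst : ℝ × ℝ → ℝ) (μ.prod ν) μ := measurePreserving_fst'
  have hFf : MemLp (F ∘ Prod.fst) 2 (μ.prod ν) := hFmem.1.comp_measurePreserving hmp
  have hFfe : eLpNorm (F ∘ Prod.fst) 2 (μ.prod ν) = eLpNorm F 2 μ :=
    eLpNorm_comp_measurePreserving hFmem.1.1 hmp
  -- bound on N
  have hNbound : ∀ p : ℝ × ℝ, ‖N p‖ ≤ gi * ‖F p.1‖ := by
    intro p
    have hpos : (0:ℝ) < ‖1 - (p.1 : ℂ) * G‖ := norm_pos_iff.2 (hG p.1)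
    have h1 : ‖(p.1 : ℂ) * F p.1‖ ≤ gi * ‖1 - (p.1 : ℂ) * G‖ * ‖F p.1‖ := by
      rw [norm_mul, Complex.norm_real, Real.norm_eq_abs]
      exact mul_le_mul_of_nonneg_right (abs_le_norm_one_sub_mul hz p.1) (norm_nonneg _)
    rw [hNdef]
    simp only [norm_div]
    rw [div_le_iff₀ hpos]
    calc ‖(p.1 : ℂ) * F p.1‖ ≤ gi * ‖1 - (p.1 : ℂ) * G‖ * ‖F p.1‖ := h1
    _ = gi * ‖F p.1‖ * ‖1 - (p.1 : ℂ) * G‖ := by ring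
  have hcontu : Continuous (fun p : ℝ × ℝ => 1 - (p.1 : ℂ) * G) :=
    continuous_const.sub ((Complex.continuous_ofReal.comp continuous_fst).mul continuous_const)
  have hcontui : Continuous (fun p : ℝ × ℝ => (1 - (p.1 : ℂ) * G)⁻¹) :=
    hcontu.inv₀ (fun p => hG p.1)
  have hNm : AEStronglyMeasurable N (μ.prod ν) := by
    have h := (((Complex.continuous_ofReal.comp continuous_fst).aestronglyMeasurable).mul
      hFf.1).mul hcontui.aestronglyMeasurable
    refine h.congr (Filter.Eventually.of_forall fun p => ?_)
    simp only [Pi.mul_apply, Function.comp_apply, hNdef, div_eq_mul_inv]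
  have hNmem : MemLp N 2 (μ.prod ν) :=
    hFf.of_le_mul hNm (Filter.Eventually.of_forall fun p => hNbound p)
  -- bound on B
  have hBN : ∀ p : ℝ × ℝ, B p = (z - (p.2 : ℂ))⁻¹ * N p := by
    intro p; rw [hBdef, hNdef]; simp only [div_eq_mul_inv, mul_inv]; ring
  have hBbound : ∀ p : ℝ × ℝ, ‖B p‖ ≤ d * gi * ‖F p.1‖ := by
    intro p
    rw [hBN p, norm_mul]
    calc ‖(z - (p.2 : ℂ))⁻¹‖ * ‖N p‖ ≤ d * (gi * ‖F p.1‖) := by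
          exact mul_le_mul (norm_inv_sub_le hz p.2) (hNbound p) (norm_nonneg _) hd0
    _ = d * gi * ‖F p.1‖ := by ring
  have hBm : AEStronglyMeasurable B (μ.prod ν) := by
    have h := ((((Complex.continuous_ofReal.comp continuous_fst).aestronglyMeasurable).mul
      hFf.1).mul hcont2i.aestronglyMeasurable).mul hcontui.aestronglyMeasurable
    refine h.congr (Filter.Eventually.of_forall fun p => ?_)
    simp only [Pi.mul_apply, Function.comp_apply, hBdef, div_eq_mul_inv, mul_inv]
    ring
  have hB : MemLp B 2 (μ.prod ν) :=
    hFf.of_le_mul hBm (Filter.Eventually.of_forall fun p => by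
      simpa using hBbound p)
  have heB : eLpNorm B 2 (μ.prod ν)
      ≤ ENNReal.ofReal (d * gi * d) * eLpNorm ψ 2 (μ.prod ν) := by
    have h1 : eLpNorm B 2 (μ.prod ν)
        ≤ ENNReal.ofReal (d * gi) * eLpNorm (F ∘ Prod.fst) 2 (μ.prod ν) :=
      eLpNorm_le_of_le_mul (by positivity) (fun p => by simpa using hBbound p)
    calc eLpNorm B 2 (μ.prod ν)
        ≤ ENNReal.ofReal (d * gi) * eLpNorm (F ∘ Prod.fst) 2 (μ.prod ν) := h1
    _ = ENNReal.ofReal (d * gi) * eLpNorm F 2 μ := by rw [hFfe]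
    _ ≤ ENNReal.ofReal (d * gi) * (ENNReal.ofReal d * eLpNorm ψ 2 (μ.prod ν)) :=
        mul_le_mul_right (hFmem.2.trans heχ) _
    _ = ENNReal.ofReal (d * gi * d) * eLpNorm ψ 2 (μ.prod ν) := by
        rw [← mul_assoc, ← ENNReal.ofReal_mul (by positivity)]
  -- MemLp of monResolvent and its norm bound
  have hφ : MemLp (monResolvent ν z ψ) 2 (μ.prod ν) := by
    rw [hmR]; exact hχ.add hB
  have heφ : eLpNorm (monResolvent ν z ψ) 2 (μ.prod ν)
      ≤ (ENNReal.ofReal d + ENNReal.ofReal (d * gi * d)) * eLpNorm ψ 2 (μ.prod ν) := by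
    rw [hmR]
    calc eLpNorm (fun p => χ p + B p) 2 (μ.prod ν)
        ≤ eLpNorm χ 2 (μ.prod ν) + eLpNorm B 2 (μ.prod ν) :=
          eLpNorm_add_le hχm hBm one_le_two
    _ ≤ ENNReal.ofReal d * eLpNorm ψ 2 (μ.prod ν)
          + ENNReal.ofReal (d * gi * d) * eLpNorm ψ 2 (μ.prod ν) := add_le_add heχ heB
    _ = (ENNReal.ofReal d + ENNReal.ofReal (d * gi * d)) * eLpNorm ψ 2 (μ.prod ν) := by
          rw [add_mul]
  -- integrability of sections
  have hχ1 : Integrable χ (μ.prod ν) :=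
    memLp_one_iff_integrable.mp (hχ.mono_exponent one_le_two)
  have hgood : ∀ᵐ x ∂μ, Integrable (fun y => ψ (x, y) / (z - (y : ℂ))) ν := hχ1.prod_right_ae
  -- the value of the inner integral
  have hInt : ∀ᵐ x ∂μ, ∫ y, monResolvent ν z ψ (x, y) ∂ν = F x / (1 - (x : ℂ) * G) := by
    filter_upwards [hgood] with x hx
    have h2 : Integrable (fun y : ℝ => ((x : ℂ) * F x / (1 - (x : ℂ) * G)) * (z - (y : ℂ))⁻¹) ν :=
      (integrable_inv_sub hz).const_mul _
    have hrw : (fun y : ℝ => monResolvent ν z ψ (x, y))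
        = fun y => ψ (x, y) / (z - (y : ℂ))
            + ((x : ℂ) * F x / (1 - (x : ℂ) * G)) * (z - (y : ℂ))⁻¹ := by
      funext y
      show χ (x, y) + B (x, y) = _
      rw [hχdef, hBdef]
      simp only [div_eq_mul_inv, mul_inv]
      ring
    rw [hrw, integral_add hx h2, integral_const_mul]
    have hGint : ∫ y, (z - (y : ℂ))⁻¹ ∂ν = G := rfl
    rw [hGint]
    exact alg2 (hG x)
  -- the a.e. identity
  have hid : ∀ᵐ p ∂(μ.prod ν),
      z * monResolvent ν z ψ p - (p.1 : ℂ) * (∫ y, monResolvent ν z ψ (p.1, y) ∂ν)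
        - (p.2 : ℂ) * monResolvent ν z ψ p = ψ p := by
    filter_upwards [Measure.quasiMeasurePreserving_fst.tendsto_ae.eventually hInt] with p hp
    rw [hp]
    exact alg_main (p.2 : ℂ) (p.1 : ℂ) (ψ p) (F p.1) G (sub_ofReal_ne hz p.2) (hG p.1)
  -- MemLp of the projection term
  have hNP : MemLp (fun p : ℝ × ℝ => (p.1 : ℂ) * ∫ y, monResolvent ν z ψ (p.1, y) ∂ν)
      2 (μ.prod ν) := by
    have hae : N =ᵐ[μ.prod ν]
        fun p : ℝ × ℝ => (p.1 : ℂ) * ∫ y, monResolvent ν z ψ (p.1, y) ∂ν := by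
      filter_upwards [Measure.quasiMeasurePreserving_fst.tendsto_ae.eventually hInt] with p hp
      rw [hp]
      simp only [hNdef]
      rw [mul_div_assoc]
    exact hNmem.ae_eq hae
  -- MemLp of the multiplication term
  have hMy : MemLp (fun p : ℝ × ℝ => (p.2 : ℂ) * monResolvent ν z ψ p) 2 (μ.prod ν) := by
    have heq : (fun p : ℝ × ℝ => (p.2 : ℂ) * monResolvent ν z ψ p)
        = fun p => z * monResolvent ν z ψ p - ψ p - N p := by
      funext p
      show (p.2 : ℂ) * (χ p + B p) = z * (χ p + B p) - ψ p - N p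
      rw [hχdef, hBdef, hNdef]
      exact alg4 (p.2 : ℂ) (p.1 : ℂ) (ψ p) (F p.1) G (sub_ofReal_ne hz p.2) (hG p.1)
    rw [heq]
    exact ((hφ.const_mul z).sub hψ).sub hNmem
  exact ⟨hφ, heφ, hNP, hMy, hid⟩


end MonRes

/-- The explicit formula defines a bounded right inverse of `z − M_x P₂ − M_y`
in the monotone model on `L²(ℝ×ℝ, μ⊗ν)`. -/
theorem monotone_model_resolvent
    (μ ν : Measure ℝ) [IsProbabilityMeasure μ] [IsProbabilityMeasure ν]
    (z : ℂ) (hz : z.im ≠ 0) :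
    (∀ x : ℝ, 1 - (x : ℂ) * cauchyTransform ν z ≠ 0) ∧
    (∃ C : NNReal,
      ∀ ψ : ℝ × ℝ → ℂ, MemLp ψ 2 (μ.prod ν) →
        MemLp (monResolvent ν z ψ) 2 (μ.prod ν) ∧
        eLpNorm (monResolvent ν z ψ) 2 (μ.prod ν) ≤ (C : ENNReal) * eLpNorm ψ 2 (μ.prod ν)) ∧
    (∀ ψ ψ' : ℝ × ℝ → ℂ, MemLp ψ 2 (μ.prod ν) → MemLp ψ' 2 (μ.prod ν) →
      monResolvent ν z (ψ + ψ') =ᵐ[μ.prod ν] monResolvent ν z ψ + monResolvent ν z ψ') ∧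
    (∀ (c : ℂ) (ψ : ℝ × ℝ → ℂ), MemLp ψ 2 (μ.prod ν) →
      monResolvent ν z (c • ψ) =ᵐ[μ.prod ν] c • monResolvent ν z ψ) ∧
    (∀ ψ : ℝ × ℝ → ℂ, MemLp ψ 2 (μ.prod ν) →
      MemLp (fun p : ℝ × ℝ => (p.1 : ℂ) * ∫ y, monResolvent ν z ψ (p.1, y) ∂ν) 2 (μ.prod ν) ∧
      MemLp (fun p : ℝ × ℝ => (p.2 : ℂ) * monResolvent ν z ψ p) 2 (μ.prod ν) ∧
      ∀ᵐ p ∂(μ.prod ν),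
        z * monResolvent ν z ψ p
          - (p.1 : ℂ) * (∫ y, monResolvent ν z ψ (p.1, y) ∂ν)
          - (p.2 : ℂ) * monResolvent ν z ψ p = ψ p) := by
  refine ⟨MonRes.one_sub_mul_ne hz, ?_, ?_, ?_, ?_⟩
  · refine ⟨(|z.im|⁻¹ + |z.im|⁻¹ * |(cauchyTransform ν z).im|⁻¹ * |z.im|⁻¹).toNNReal,
      fun ψ hψ => ?_⟩
    obtain ⟨h1, h2, -⟩ := MonRes.main_aux hz hψ
    refine ⟨h1, le_trans h2 (mul_le_mul_left ?_ _)⟩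
    rw [← ENNReal.ofReal_add (by positivity) (by positivity)]
    exact le_of_eq rfl
  · intro ψ ψ' hψ hψ'
    have h := MonRes.good_sections hz hψ
    have h' := MonRes.good_sections hz hψ'
    filter_upwards [Measure.quasiMeasurePreserving_fst.tendsto_ae.eventually (h.and h')]
      with p hp
    obtain ⟨h1, h2⟩ := hp
    show monResolvent ν z (ψ + ψ') p = monResolvent ν z ψ p + monResolvent ν z ψ' p
    simp only [monResolvent, Pi.add_apply]
    have hint : ∫ y, (ψ (p.1, y) + ψ' (p.1, y)) / (z - (y : ℂ)) ∂ν
        = (∫ y, ψ (p.1, y) / (z - (y : ℂ)) ∂ν) + ∫ y, ψ' (p.1, y) / (z - (y : ℂ)) ∂ν := by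
      simp only [add_div]
      exact integral_add h1 h2
    rw [hint]
    ring
  · intro c ψ hψ
    refine Filter.Eventually.of_forall fun p => ?_
    show monResolvent ν z (c • ψ) p = c • monResolvent ν z ψ p
    simp only [monResolvent, Pi.smul_apply, smul_eq_mul]
    have hint : ∫ y, c * ψ (p.1, y) / (z - (y : ℂ)) ∂ν
        = c * ∫ y, ψ (p.1, y) / (z - (y : ℂ)) ∂ν := by
      simp only [mul_div_assoc]
      exact integral_const_mul c _
    rw [hint]
    ring
  · intro ψ hψ
    obtain ⟨-, -, h3, h4, h5⟩ := MonRes.main_aux hz hψ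
    exact ⟨h3, h4, h5⟩
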